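/- Let (H,K) be a match pair of finite groupoids for G and I the operator on ℓ²(G×G) defined by (Iξ)(x,y) = ξ(x·p₁(p₂(x)⁻¹y), p₂(x)⁻¹y) when m(x) = r(y), 0 otherwise. Then I satisfies the pentagonal relation I₁₂I₁₃I₂₃ = I₂₃I₁₂ on ℓ²(G×G×G). -/
import Mathlib


/-- A (small) groupoid structure on a carrier type `G` of "arrows", with
source map `s`, range map `r`, partial multiplication `mul` (defined when
`s x = r y`) and inversion `inv`.  Units are identified with the elements
`s x`, `r x`. -/
structure Gpd (G : Type*) where
  s : G → G
  r : G → G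
  mul : ∀ x y : G, s x = r y → G
  inv : G → G
  s_mul : ∀ x y h, s (mul x y h) = s y
  r_mul : ∀ x y h, r (mul x y h) = r x
  s_inv : ∀ x, s (inv x) = r x
  r_inv : ∀ x, r (inv x) = s x
  s_s : ∀ x, s (s x) = s x
  r_s : ∀ x, r (s x) = s x
  s_r : ∀ x, s (r x) = r x
  r_r : ∀ x, r (r x) = r x
  mul_source : ∀ x (h : s x = r (s x)), mul x (s x) h = x
  range_mul : ∀ x (h : s (r x) = r x), mul (r x) x h = x
  mul_inv : ∀ x (h : s x = r (inv x)), mul x (inv x) h = r x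
  inv_mul : ∀ x (h : s (inv x) = r x), mul (inv x) x h = s x
  mul_assoc : ∀ x y z (hxy : s x = r y) (hyz : s y = r z)
      (h1 : s (mul x y hxy) = r z) (h2 : s x = r (mul y z hyz)),
      mul (mul x y hxy) z h1 = mul x (mul y z hyz) h2

namespace Gpd

variable {G : Type*} (𝒢 : Gpd G)

/-- The set of units `G⁰` of the groupoid. -/
def units : Set G := {u | 𝒢.r u = u}

/-- A wide subgroupoid: a subset closed under multiplication and inversion and
containing all units. -/
structure IsSubgpd (H : Set G) : Prop where
  mul_mem : ∀ x y (h : 𝒢.s x = 𝒢.r y), x ∈ H → y ∈ H → 𝒢.mul x y h ∈ H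
  inv_mem : ∀ x, x ∈ H → 𝒢.inv x ∈ H
  unit_mem : ∀ u, u ∈ 𝒢.units → u ∈ H

/-- A match pair of subgroupoids `H`, `K` of `G`, together with the projection
maps `p₁ : G → H`, `p₂ : G → K` of the unique factorization `g = p₁ g * p₂ g`. -/
structure MatchPair (H K : Set G) (p₁ p₂ : G → G) : Prop where
  subH : 𝒢.IsSubgpd H
  subK : 𝒢.IsSubgpd K
  inter : H ∩ K ⊆ 𝒢.units
  p₁_mem : ∀ g, p₁ g ∈ H
  p₂_mem : ∀ g, p₂ g ∈ K
  comp : ∀ g, 𝒢.s (p₁ g) = 𝒢.r (p₂ g)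
  decomp : ∀ g, g = 𝒢.mul (p₁ g) (p₂ g) (comp g)
  uniq : ∀ h, h ∈ H → ∀ k, k ∈ K → ∀ hc : 𝒢.s h = 𝒢.r k,
      p₁ (𝒢.mul h k hc) = h ∧ p₂ (𝒢.mul h k hc) = k

theorem MatchPair.s_p₂ {H K : Set G} {p₁ p₂ : G → G}
    (mp : 𝒢.MatchPair H K p₁ p₂) (g : G) : 𝒢.s (p₂ g) = 𝒢.s g := by
  conv_rhs => rw [mp.decomp g]
  rw [𝒢.s_mul]

theorem MatchPair.r_p₁ {H K : Set G} {p₁ p₂ : G → G}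
    (mp : 𝒢.MatchPair H K p₁ p₂) (g : G) : 𝒢.r (p₁ g) = 𝒢.r g := by
  conv_rhs => rw [mp.decomp g]
  rw [𝒢.r_mul]

/-- the left "action" `k ▷ h = p₁ (kh)` -/
def rAct (p₁ : G → G) (k h : G) (hc : 𝒢.s k = 𝒢.r h) : G := p₁ (𝒢.mul k h hc)

/-- the right "action" `k ◁ h = p₂ (kh)` -/
def lAct (p₂ : G → G) (k h : G) (hc : 𝒢.s k = 𝒢.r h) : G := p₂ (𝒢.mul k h hc)

end Gpd

namespace Gpd

noncomputable section
attribute [local instance] Classical.propDecidable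

variable {G : Type*} (𝒢 : Gpd G) {H K : Set G} {p₁ p₂ : G → G}

/-- The leg `I₁₂` of the match pair partial isometry on `ℓ²(G × G × G)`. -/
def IMP12 (mp : 𝒢.MatchPair H K p₁ p₂) : ((G × G × G) → ℂ) → ((G × G × G) → ℂ) :=
  fun ξ p =>
    if hm : 𝒢.s (p₁ p.1) = 𝒢.r p.2.1 then
      have h1 : 𝒢.s (𝒢.inv (p₂ p.1)) = 𝒢.r p.2.1 := by
        rw [𝒢.s_inv, ← mp.comp p.1]; exact hm
      have h2 : 𝒢.s p.1 = 𝒢.r (p₁ (𝒢.mul (𝒢.inv (p₂ p.1)) p.2.1 h1)) := by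
        rw [mp.r_p₁, 𝒢.r_mul, 𝒢.r_inv, mp.s_p₂]
      ξ (𝒢.mul p.1 (p₁ (𝒢.mul (𝒢.inv (p₂ p.1)) p.2.1 h1)) h2,
        𝒢.mul (𝒢.inv (p₂ p.1)) p.2.1 h1, p.2.2)
    else 0

/-- The leg `I₂₃` of the match pair partial isometry on `ℓ²(G × G × G)`. -/
def IMP23 (mp : 𝒢.MatchPair H K p₁ p₂) : ((G × G × G) → ℂ) → ((G × G × G) → ℂ) :=
  fun ξ p =>
    if hm : 𝒢.s (p₁ p.2.1) = 𝒢.r p.2.2 then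
      have h1 : 𝒢.s (𝒢.inv (p₂ p.2.1)) = 𝒢.r p.2.2 := by
        rw [𝒢.s_inv, ← mp.comp p.2.1]; exact hm
      have h2 : 𝒢.s p.2.1 = 𝒢.r (p₁ (𝒢.mul (𝒢.inv (p₂ p.2.1)) p.2.2 h1)) := by
        rw [mp.r_p₁, 𝒢.r_mul, 𝒢.r_inv, mp.s_p₂]
      ξ (p.1, 𝒢.mul p.2.1 (p₁ (𝒢.mul (𝒢.inv (p₂ p.2.1)) p.2.2 h1)) h2,
        𝒢.mul (𝒢.inv (p₂ p.2.1)) p.2.2 h1)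
    else 0

/-- The leg `I₁₃` of the match pair partial isometry on `ℓ²(G × G × G)`. -/
def IMP13 (mp : 𝒢.MatchPair H K p₁ p₂) : ((G × G × G) → ℂ) → ((G × G × G) → ℂ) :=
  fun ξ p =>
    if hm : 𝒢.s (p₁ p.1) = 𝒢.r p.2.2 then
      have h1 : 𝒢.s (𝒢.inv (p₂ p.1)) = 𝒢.r p.2.2 := by
        rw [𝒢.s_inv, ← mp.comp p.1]; exact hm
      have h2 : 𝒢.s p.1 = 𝒢.r (p₁ (𝒢.mul (𝒢.inv (p₂ p.1)) p.2.2 h1)) := by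
        rw [mp.r_p₁, 𝒢.r_mul, 𝒢.r_inv, mp.s_p₂]
      ξ (𝒢.mul p.1 (p₁ (𝒢.mul (𝒢.inv (p₂ p.1)) p.2.2 h1)) h2,
        p.2.1, 𝒢.mul (𝒢.inv (p₂ p.1)) p.2.2 h1)
    else 0

/- ### Auxiliary lemmas -/

theorem mul_congr {x x' y y' : G} (hx : x = x') (hy : y = y')
    (h : 𝒢.s x = 𝒢.r y) (h' : 𝒢.s x' = 𝒢.r y') :
    𝒢.mul x y h = 𝒢.mul x' y' h' := by subst hx; subst hy; rfl

theorem inv_mul_cancel_left (a x : G) (h : 𝒢.s a = 𝒢.r x)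
    (h' : 𝒢.s (𝒢.inv a) = 𝒢.r (𝒢.mul a x h)) :
    𝒢.mul (𝒢.inv a) (𝒢.mul a x h) h' = x := by
  have hia : 𝒢.s (𝒢.inv a) = 𝒢.r a := 𝒢.s_inv a
  have h1 : 𝒢.s (𝒢.mul (𝒢.inv a) a hia) = 𝒢.r x := by rw [𝒢.s_mul]; exact h
  have h2 : 𝒢.s (𝒢.r x) = 𝒢.r x := 𝒢.s_r x
  calc 𝒢.mul (𝒢.inv a) (𝒢.mul a x h) h'
      = 𝒢.mul (𝒢.mul (𝒢.inv a) a hia) x h1 :=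
        (𝒢.mul_assoc _ _ _ hia h h1 h').symm
    _ = 𝒢.mul (𝒢.r x) x h2 := 𝒢.mul_congr (by rw [𝒢.inv_mul a hia, h]) rfl h1 h2
    _ = x := 𝒢.range_mul x h2

theorem mul_inv_cancel_left (a x : G) (h : 𝒢.s (𝒢.inv a) = 𝒢.r x)
    (h' : 𝒢.s a = 𝒢.r (𝒢.mul (𝒢.inv a) x h)) :
    𝒢.mul a (𝒢.mul (𝒢.inv a) x h) h' = x := by
  have hia : 𝒢.s a = 𝒢.r (𝒢.inv a) := (𝒢.r_inv a).symm
  have h1 : 𝒢.s (𝒢.mul a (𝒢.inv a) hia) = 𝒢.r x := by rw [𝒢.s_mul]; exact h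
  have h2 : 𝒢.s (𝒢.r x) = 𝒢.r x := 𝒢.s_r x
  calc 𝒢.mul a (𝒢.mul (𝒢.inv a) x h) h'
      = 𝒢.mul (𝒢.mul a (𝒢.inv a) hia) x h1 :=
        (𝒢.mul_assoc _ _ _ hia h h1 h').symm
    _ = 𝒢.mul (𝒢.r x) x h2 := by
        refine 𝒢.mul_congr ?_ rfl h1 h2
        rw [𝒢.mul_inv a hia, ← h, 𝒢.s_inv]
    _ = x := 𝒢.range_mul x h2

theorem mul_inv_cancel_right (a b : G) (h : 𝒢.s a = 𝒢.r b)
    (h' : 𝒢.s (𝒢.mul a b h) = 𝒢.r (𝒢.inv b)) :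
    𝒢.mul (𝒢.mul a b h) (𝒢.inv b) h' = a := by
  have hbi : 𝒢.s b = 𝒢.r (𝒢.inv b) := (𝒢.r_inv b).symm
  have h2 : 𝒢.s a = 𝒢.r (𝒢.mul b (𝒢.inv b) hbi) := by rw [𝒢.r_mul]; exact h
  have h3 : 𝒢.s a = 𝒢.r (𝒢.s a) := (𝒢.r_s a).symm
  calc 𝒢.mul (𝒢.mul a b h) (𝒢.inv b) h'
      = 𝒢.mul a (𝒢.mul b (𝒢.inv b) hbi) h2 := 𝒢.mul_assoc _ _ _ h hbi h' h2
    _ = 𝒢.mul a (𝒢.s a) h3 := 𝒢.mul_congr rfl (by rw [𝒢.mul_inv b hbi, ← h]) h2 h3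
    _ = a := 𝒢.mul_source a h3

theorem left_cancel (a t w : G) (h1 : 𝒢.s a = 𝒢.r t) (h2 : 𝒢.s a = 𝒢.r w)
    (he : 𝒢.mul a t h1 = 𝒢.mul a w h2) : t = w := by
  have hat : 𝒢.s (𝒢.inv a) = 𝒢.r (𝒢.mul a t h1) := by rw [𝒢.s_inv, 𝒢.r_mul]
  have haw : 𝒢.s (𝒢.inv a) = 𝒢.r (𝒢.mul a w h2) := by rw [𝒢.s_inv, 𝒢.r_mul]
  calc t = 𝒢.mul (𝒢.inv a) (𝒢.mul a t h1) hat := (𝒢.inv_mul_cancel_left a t h1 hat).symm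
    _ = 𝒢.mul (𝒢.inv a) (𝒢.mul a w h2) haw := 𝒢.mul_congr rfl he hat haw
    _ = w := 𝒢.inv_mul_cancel_left a w h2 haw

/-- The key structural lemma: with `V = p₂(x)⁻¹ y`, `D = p₂(x)⁻¹ p₁(y)` and
`X = x · p₁(V)`, one has `p₁ V = p₁ D`, `p₂ V = p₂ D · p₂ y`,
`p₁ X = p₁ x · p₁ y` and `p₂ X = (p₂ D)⁻¹`. -/
theorem key (mp : 𝒢.MatchPair H K p₁ p₂) (x y : G)
    (h1 : 𝒢.s (𝒢.inv (p₂ x)) = 𝒢.r y)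
    (h2 : 𝒢.s x = 𝒢.r (p₁ (𝒢.mul (𝒢.inv (p₂ x)) y h1)))
    (hd : 𝒢.s (𝒢.inv (p₂ x)) = 𝒢.r (p₁ y))
    (hxy : 𝒢.s (p₁ x) = 𝒢.r (p₁ y))
    (hvv : 𝒢.s (p₂ (𝒢.mul (𝒢.inv (p₂ x)) (p₁ y) hd)) = 𝒢.r (p₂ y)) :
    p₁ (𝒢.mul (𝒢.inv (p₂ x)) y h1) = p₁ (𝒢.mul (𝒢.inv (p₂ x)) (p₁ y) hd) ∧
    p₂ (𝒢.mul (𝒢.inv (p₂ x)) y h1)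
      = 𝒢.mul (p₂ (𝒢.mul (𝒢.inv (p₂ x)) (p₁ y) hd)) (p₂ y) hvv ∧
    p₁ (𝒢.mul x (p₁ (𝒢.mul (𝒢.inv (p₂ x)) y h1)) h2) = 𝒢.mul (p₁ x) (p₁ y) hxy ∧
    p₂ (𝒢.mul x (p₁ (𝒢.mul (𝒢.inv (p₂ x)) y h1)) h2)
      = 𝒢.inv (p₂ (𝒢.mul (𝒢.inv (p₂ x)) (p₁ y) hd)) := by
  set a := 𝒢.inv (p₂ x) with ha
  set D := 𝒢.mul a (p₁ y) hd with hD
  -- V = D · p₂ y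
  have hDy : 𝒢.s D = 𝒢.r (p₂ y) := by rw [𝒢.s_mul]; exact mp.comp y
  have hh : 𝒢.s a = 𝒢.r (𝒢.mul (p₁ y) (p₂ y) (mp.comp y)) := by rw [𝒢.r_mul]; exact hd
  have eV : 𝒢.mul a y h1 = 𝒢.mul D (p₂ y) hDy := by
    calc 𝒢.mul a y h1 = 𝒢.mul a (𝒢.mul (p₁ y) (p₂ y) (mp.comp y)) hh :=
          𝒢.mul_congr rfl (mp.decomp y) h1 hh
      _ = 𝒢.mul D (p₂ y) hDy :=
          (𝒢.mul_assoc a (p₁ y) (p₂ y) hd (mp.comp y) hDy hh).symm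
  -- V = p₁ D · (p₂ D · p₂ y)
  have hDd : 𝒢.s (p₁ D) = 𝒢.r (𝒢.mul (p₂ D) (p₂ y) hvv) := by
    rw [𝒢.r_mul]; exact mp.comp D
  have hDD : 𝒢.s (𝒢.mul (p₁ D) (p₂ D) (mp.comp D)) = 𝒢.r (p₂ y) := by
    rw [𝒢.s_mul, mp.s_p₂]; exact hDy
  have eV2 : 𝒢.mul D (p₂ y) hDy = 𝒢.mul (p₁ D) (𝒢.mul (p₂ D) (p₂ y) hvv) hDd := by
    calc 𝒢.mul D (p₂ y) hDy
        = 𝒢.mul (𝒢.mul (p₁ D) (p₂ D) (mp.comp D)) (p₂ y) hDD :=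
          𝒢.mul_congr (mp.decomp D) rfl hDy hDD
      _ = _ := 𝒢.mul_assoc _ _ _ (mp.comp D) hvv hDD hDd
  have hu := mp.uniq (p₁ D) (mp.p₁_mem D) (𝒢.mul (p₂ D) (p₂ y) hvv)
    (mp.subK.mul_mem _ _ hvv (mp.p₂_mem D) (mp.p₂_mem y)) hDd
  have c1 : p₁ (𝒢.mul a y h1) = p₁ D := by rw [eV, eV2, hu.1]
  have c2 : p₂ (𝒢.mul a y h1) = 𝒢.mul (p₂ D) (p₂ y) hvv := by rw [eV, eV2, hu.2]
  -- p₂ x · D = p₁ y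
  have hxD : 𝒢.s (p₂ x) = 𝒢.r D := by rw [𝒢.r_mul, ha, 𝒢.r_inv]
  have eC : 𝒢.mul (p₂ x) D hxD = p₁ y := 𝒢.mul_inv_cancel_left (p₂ x) (p₁ y) hd hxD
  -- p₂ x · p₁ D = p₁ y · (p₂ D)⁻¹
  have hx1 : 𝒢.s (p₂ x) = 𝒢.r (p₁ D) := by rw [mp.r_p₁]; exact hxD
  have h_ab : 𝒢.s (𝒢.mul (p₂ x) (p₁ D) hx1) = 𝒢.r (p₂ D) := by
    rw [𝒢.s_mul]; exact mp.comp D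
  have hyD : 𝒢.s (p₁ y) = 𝒢.r (𝒢.inv (p₂ D)) := by
    rw [𝒢.r_inv, mp.s_p₂, 𝒢.s_mul]
  have hx2 : 𝒢.s (p₂ x) = 𝒢.r (𝒢.mul (p₁ D) (p₂ D) (mp.comp D)) := by
    rw [𝒢.r_mul]; exact hx1
  have e1 : 𝒢.mul (𝒢.mul (p₂ x) (p₁ D) hx1) (p₂ D) h_ab = p₁ y := by
    calc 𝒢.mul (𝒢.mul (p₂ x) (p₁ D) hx1) (p₂ D) h_ab
        = 𝒢.mul (p₂ x) (𝒢.mul (p₁ D) (p₂ D) (mp.comp D)) hx2 :=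
          𝒢.mul_assoc _ _ _ hx1 (mp.comp D) h_ab hx2
      _ = 𝒢.mul (p₂ x) D hxD := 𝒢.mul_congr rfl (mp.decomp D).symm hx2 hxD
      _ = p₁ y := eC
  have h_abi : 𝒢.s (𝒢.mul (𝒢.mul (p₂ x) (p₁ D) hx1) (p₂ D) h_ab)
      = 𝒢.r (𝒢.inv (p₂ D)) := by rw [𝒢.s_mul, 𝒢.r_inv, mp.s_p₂]
  have eCd : 𝒢.mul (p₂ x) (p₁ D) hx1 = 𝒢.mul (p₁ y) (𝒢.inv (p₂ D)) hyD := by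
    calc 𝒢.mul (p₂ x) (p₁ D) hx1
        = 𝒢.mul (𝒢.mul (𝒢.mul (p₂ x) (p₁ D) hx1) (p₂ D) h_ab) (𝒢.inv (p₂ D)) h_abi :=
          (𝒢.mul_inv_cancel_right _ _ h_ab h_abi).symm
      _ = 𝒢.mul (p₁ y) (𝒢.inv (p₂ D)) hyD := 𝒢.mul_congr e1 rfl h_abi hyD
  -- X = (p₁ x · p₁ y) · (p₂ D)⁻¹
  have hx3 : 𝒢.s x = 𝒢.r (p₁ D) := by rw [mp.r_p₁, 𝒢.r_mul, ha, 𝒢.r_inv, mp.s_p₂]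
  have hx4 : 𝒢.s (𝒢.mul (p₁ x) (p₂ x) (mp.comp x)) = 𝒢.r (p₁ D) := by
    rw [𝒢.s_mul, mp.s_p₂]; exact hx3
  have hx5 : 𝒢.s (p₁ x) = 𝒢.r (𝒢.mul (p₂ x) (p₁ D) hx1) := by
    rw [𝒢.r_mul]; exact mp.comp x
  have hx6 : 𝒢.s (p₁ x) = 𝒢.r (𝒢.mul (p₁ y) (𝒢.inv (p₂ D)) hyD) := by
    rw [𝒢.r_mul]; exact hxy
  have hx7 : 𝒢.s (𝒢.mul (p₁ x) (p₁ y) hxy) = 𝒢.r (𝒢.inv (p₂ D)) := by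
    rw [𝒢.s_mul]; exact hyD
  have eX : 𝒢.mul x (p₁ (𝒢.mul a y h1)) h2
      = 𝒢.mul (𝒢.mul (p₁ x) (p₁ y) hxy) (𝒢.inv (p₂ D)) hx7 := by
    calc 𝒢.mul x (p₁ (𝒢.mul a y h1)) h2
        = 𝒢.mul (𝒢.mul (p₁ x) (p₂ x) (mp.comp x)) (p₁ D) hx4 :=
          𝒢.mul_congr (mp.decomp x) c1 h2 hx4
      _ = 𝒢.mul (p₁ x) (𝒢.mul (p₂ x) (p₁ D) hx1) hx5 :=
          𝒢.mul_assoc _ _ _ (mp.comp x) hx1 hx4 hx5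
      _ = 𝒢.mul (p₁ x) (𝒢.mul (p₁ y) (𝒢.inv (p₂ D)) hyD) hx6 :=
          𝒢.mul_congr rfl eCd hx5 hx6
      _ = _ := (𝒢.mul_assoc _ _ _ hxy hyD hx7 hx6).symm
  have hu2 := mp.uniq (𝒢.mul (p₁ x) (p₁ y) hxy)
    (mp.subH.mul_mem _ _ hxy (mp.p₁_mem x) (mp.p₁_mem y)) (𝒢.inv (p₂ D))
    (mp.subK.inv_mem _ (mp.p₂_mem D)) hx7
  exact ⟨c1, c2, by rw [eX, hu2.1], by rw [eX, hu2.2]⟩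

theorem IMP12_apply (mp : 𝒢.MatchPair H K p₁ p₂) (ξ : (G × G × G) → ℂ) (x y z : G)
    (hm : 𝒢.s (p₁ x) = 𝒢.r y)
    (h1 : 𝒢.s (𝒢.inv (p₂ x)) = 𝒢.r y)
    (h2 : 𝒢.s x = 𝒢.r (p₁ (𝒢.mul (𝒢.inv (p₂ x)) y h1))) :
    𝒢.IMP12 mp ξ (x, y, z) =
      ξ (𝒢.mul x (p₁ (𝒢.mul (𝒢.inv (p₂ x)) y h1)) h2,
        𝒢.mul (𝒢.inv (p₂ x)) y h1, z) := dif_pos hm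

theorem IMP12_zero (mp : 𝒢.MatchPair H K p₁ p₂) (ξ : (G × G × G) → ℂ) (x y z : G)
    (hm : ¬ 𝒢.s (p₁ x) = 𝒢.r y) : 𝒢.IMP12 mp ξ (x, y, z) = 0 := dif_neg hm

theorem IMP23_apply (mp : 𝒢.MatchPair H K p₁ p₂) (ξ : (G × G × G) → ℂ) (x y z : G)
    (hm : 𝒢.s (p₁ y) = 𝒢.r z)
    (h1 : 𝒢.s (𝒢.inv (p₂ y)) = 𝒢.r z)
    (h2 : 𝒢.s y = 𝒢.r (p₁ (𝒢.mul (𝒢.inv (p₂ y)) z h1))) :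
    𝒢.IMP23 mp ξ (x, y, z) =
      ξ (x, 𝒢.mul y (p₁ (𝒢.mul (𝒢.inv (p₂ y)) z h1)) h2,
        𝒢.mul (𝒢.inv (p₂ y)) z h1) := dif_pos hm

theorem IMP23_zero (mp : 𝒢.MatchPair H K p₁ p₂) (ξ : (G × G × G) → ℂ) (x y z : G)
    (hm : ¬ 𝒢.s (p₁ y) = 𝒢.r z) : 𝒢.IMP23 mp ξ (x, y, z) = 0 := dif_neg hm

theorem IMP13_apply (mp : 𝒢.MatchPair H K p₁ p₂) (ξ : (G × G × G) → ℂ) (x y z : G)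
    (hm : 𝒢.s (p₁ x) = 𝒢.r z)
    (h1 : 𝒢.s (𝒢.inv (p₂ x)) = 𝒢.r z)
    (h2 : 𝒢.s x = 𝒢.r (p₁ (𝒢.mul (𝒢.inv (p₂ x)) z h1))) :
    𝒢.IMP13 mp ξ (x, y, z) =
      ξ (𝒢.mul x (p₁ (𝒢.mul (𝒢.inv (p₂ x)) z h1)) h2,
        y, 𝒢.mul (𝒢.inv (p₂ x)) z h1) := dif_pos hm

theorem IMP13_zero (mp : 𝒢.MatchPair H K p₁ p₂) (ξ : (G × G × G) → ℂ) (x y z : G)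
    (hm : ¬ 𝒢.s (p₁ x) = 𝒢.r z) : 𝒢.IMP13 mp ξ (x, y, z) = 0 := dif_neg hm

/-- the match pair partial isometry satisfies the pentagonal
relation `I₁₂ I₁₃ I₂₃ = I₂₃ I₁₂` on `ℓ²(G × G × G)`. -/
theorem stmt15 [Fintype G] (mp : 𝒢.MatchPair H K p₁ p₂) :
    ∀ ξ : (G × G × G) → ℂ,
      𝒢.IMP12 mp (𝒢.IMP13 mp (𝒢.IMP23 mp ξ)) = 𝒢.IMP23 mp (𝒢.IMP12 mp ξ) := by
  intro ξ
  funext p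
  obtain ⟨x, y, z⟩ := p
  by_cases hm1 : 𝒢.s (p₁ x) = 𝒢.r y
  · by_cases hm2 : 𝒢.s (p₁ y) = 𝒢.r z
    · -- both conditions hold
      have hV1 : 𝒢.s (𝒢.inv (p₂ x)) = 𝒢.r y := by
        rw [𝒢.s_inv, ← mp.comp x]; exact hm1
      set V := 𝒢.mul (𝒢.inv (p₂ x)) y hV1 with hVdef
      have hX2 : 𝒢.s x = 𝒢.r (p₁ V) := by
        rw [mp.r_p₁, 𝒢.r_mul, 𝒢.r_inv, mp.s_p₂]
      set X := 𝒢.mul x (p₁ V) hX2 with hXdef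
      -- key lemma for the pair (x, y)
      have hd : 𝒢.s (𝒢.inv (p₂ x)) = 𝒢.r (p₁ y) := by rw [mp.r_p₁]; exact hV1
      have hxy : 𝒢.s (p₁ x) = 𝒢.r (p₁ y) := by rw [mp.r_p₁]; exact hm1
      set D := 𝒢.mul (𝒢.inv (p₂ x)) (p₁ y) hd with hDdef
      have hvv : 𝒢.s (p₂ D) = 𝒢.r (p₂ y) := by
        rw [mp.s_p₂, 𝒢.s_mul]; exact mp.comp y
      obtain ⟨k1, k2, k3, k4⟩ := 𝒢.key mp x y hV1 hX2 hd hxy hvv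
      -- middle leg data
      have hmX : 𝒢.s (p₁ X) = 𝒢.r z := by rw [k3, 𝒢.s_mul]; exact hm2
      have hU1 : 𝒢.s (𝒢.inv (p₂ X)) = 𝒢.r z := by
        rw [𝒢.s_inv, ← mp.comp X]; exact hmX
      set U := 𝒢.mul (𝒢.inv (p₂ X)) z hU1 with hUdef
      have hX'2 : 𝒢.s X = 𝒢.r (p₁ U) := by
        rw [mp.r_p₁, 𝒢.r_mul, 𝒢.r_inv, mp.s_p₂]
      set X' := 𝒢.mul X (p₁ U) hX'2 with hX'def
      have hmV : 𝒢.s (p₁ V) = 𝒢.r U := by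
        rw [𝒢.r_mul, 𝒢.r_inv, mp.s_p₂, 𝒢.s_mul]
      have hT1 : 𝒢.s (𝒢.inv (p₂ V)) = 𝒢.r U := by
        rw [𝒢.s_inv, ← mp.comp V]; exact hmV
      set T := 𝒢.mul (𝒢.inv (p₂ V)) U hT1 with hTdef
      have hV'2 : 𝒢.s V = 𝒢.r (p₁ T) := by
        rw [mp.r_p₁, 𝒢.r_mul, 𝒢.r_inv, mp.s_p₂]
      -- right-hand-side data
      have hW1 : 𝒢.s (𝒢.inv (p₂ y)) = 𝒢.r z := by
        rw [𝒢.s_inv, ← mp.comp y]; exact hm2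
      set W := 𝒢.mul (𝒢.inv (p₂ y)) z hW1 with hWdef
      have hY2 : 𝒢.s y = 𝒢.r (p₁ W) := by
        rw [mp.r_p₁, 𝒢.r_mul, 𝒢.r_inv, mp.s_p₂]
      set Y' := 𝒢.mul y (p₁ W) hY2 with hY'def
      have hm1' : 𝒢.s (p₁ x) = 𝒢.r Y' := by rw [𝒢.r_mul]; exact hm1
      have hV''1 : 𝒢.s (𝒢.inv (p₂ x)) = 𝒢.r Y' := by rw [𝒢.r_mul]; exact hV1
      set V'' := 𝒢.mul (𝒢.inv (p₂ x)) Y' hV''1 with hV''def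
      have hx2'' : 𝒢.s x = 𝒢.r (p₁ V'') := by
        rw [mp.r_p₁, 𝒢.r_mul, 𝒢.r_inv, mp.s_p₂]
      rw [𝒢.IMP12_apply mp _ x y z hm1 hV1 hX2,
        𝒢.IMP13_apply mp _ X V z hmX hU1 hX'2,
        𝒢.IMP23_apply mp ξ X' V U hmV hT1 hV'2,
        𝒢.IMP23_apply mp _ x y z hm2 hW1 hY2,
        𝒢.IMP12_apply mp ξ x Y' W hm1' hV''1 hx2'']
      -- third coordinates: T = W
      have hPP : 𝒢.s (p₂ X) = 𝒢.r (p₂ V) := by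
        rw [mp.s_p₂, 𝒢.s_mul]; exact mp.comp V
      have hPP2 : 𝒢.s (𝒢.inv (p₂ D)) = 𝒢.r (𝒢.mul (p₂ D) (p₂ y) hvv) := by
        rw [𝒢.s_inv, 𝒢.r_mul]
      have eP : 𝒢.mul (p₂ X) (p₂ V) hPP = p₂ y := by
        calc 𝒢.mul (p₂ X) (p₂ V) hPP
            = 𝒢.mul (𝒢.inv (p₂ D)) (𝒢.mul (p₂ D) (p₂ y) hvv) hPP2 :=
              𝒢.mul_congr k4 k2 hPP hPP2
          _ = p₂ y := 𝒢.inv_mul_cancel_left (p₂ D) (p₂ y) hvv hPP2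
      have hyT : 𝒢.s (p₂ y) = 𝒢.r T := by
        rw [𝒢.r_mul, 𝒢.r_inv, ← eP, 𝒢.s_mul]
      have hyW : 𝒢.s (p₂ y) = 𝒢.r W := by rw [𝒢.r_mul, 𝒢.r_inv]
      have hXT : 𝒢.s (𝒢.mul (p₂ X) (p₂ V) hPP) = 𝒢.r T := by
        rw [eP]; exact hyT
      have e2 : 𝒢.mul (p₂ y) W hyW = z :=
        𝒢.mul_inv_cancel_left (p₂ y) z hW1 hyW
      have e1 : 𝒢.mul (p₂ y) T hyT = z := by
        have hVT : 𝒢.s (p₂ V) = 𝒢.r T := by rw [𝒢.r_mul, 𝒢.r_inv]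
        have hXVT : 𝒢.s (p₂ X) = 𝒢.r (𝒢.mul (p₂ V) T hVT) := by
          rw [𝒢.r_mul]; exact hPP
        have hXU : 𝒢.s (p₂ X) = 𝒢.r U := by rw [𝒢.r_mul, 𝒢.r_inv]
        calc 𝒢.mul (p₂ y) T hyT
            = 𝒢.mul (𝒢.mul (p₂ X) (p₂ V) hPP) T hXT :=
              𝒢.mul_congr eP.symm rfl hyT hXT
          _ = 𝒢.mul (p₂ X) (𝒢.mul (p₂ V) T hVT) hXVT :=
              𝒢.mul_assoc _ _ _ hPP hVT hXT hXVT
          _ = 𝒢.mul (p₂ X) U hXU :=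
              𝒢.mul_congr rfl (𝒢.mul_inv_cancel_left (p₂ V) U hT1 hVT) hXVT hXU
          _ = z := 𝒢.mul_inv_cancel_left (p₂ X) z hU1 hXU
      have eT : T = W := 𝒢.left_cancel (p₂ y) T W hyT hyW (e1.trans e2.symm)
      -- second coordinates: V'' = V · p₁ T
      have hVW : 𝒢.s V = 𝒢.r (p₁ W) := by
        rw [mp.r_p₁, 𝒢.r_mul, 𝒢.r_inv, mp.s_p₂]
        exact 𝒢.s_mul (𝒢.inv (p₂ x)) y hV1
      have eV'' : V'' = 𝒢.mul V (p₁ T) hV'2 := by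
        calc V'' = 𝒢.mul V (p₁ W) hVW :=
              (𝒢.mul_assoc _ _ _ hV1 hY2 hVW hV''1).symm
          _ = 𝒢.mul V (p₁ T) hV'2 :=
              𝒢.mul_congr rfl (congrArg p₁ eT.symm) hVW hV'2
      -- first coordinates: X' = x · p₁ V''
      have hd' : 𝒢.s (𝒢.inv (p₂ V)) = 𝒢.r (p₁ U) := by rw [mp.r_p₁]; exact hT1
      have hxy' : 𝒢.s (p₁ V) = 𝒢.r (p₁ U) := by rw [mp.r_p₁]; exact hmV
      have hvv' : 𝒢.s (p₂ (𝒢.mul (𝒢.inv (p₂ V)) (p₁ U) hd')) = 𝒢.r (p₂ U) := by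
        rw [mp.s_p₂, 𝒢.s_mul]; exact mp.comp U
      have ep₁V'' : p₁ V'' = 𝒢.mul (p₁ V) (p₁ U) hxy' := by
        rw [eV'']; exact (𝒢.key mp V U hT1 hV'2 hd' hxy' hvv').2.2.1
      have hx8 : 𝒢.s x = 𝒢.r (𝒢.mul (p₁ V) (p₁ U) hxy') := by
        rw [𝒢.r_mul]; exact hX2
      have eX : 𝒢.mul x (p₁ V'') hx2'' = X' := by
        calc 𝒢.mul x (p₁ V'') hx2''
            = 𝒢.mul x (𝒢.mul (p₁ V) (p₁ U) hxy') hx8 :=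
              𝒢.mul_congr rfl ep₁V'' hx2'' hx8
          _ = X' := (𝒢.mul_assoc _ _ _ hX2 hxy' hX'2 hx8).symm
      rw [eX, ← eV'', ← eT]
    · -- `s (p₁ y) ≠ r z`
      have hV1 : 𝒢.s (𝒢.inv (p₂ x)) = 𝒢.r y := by
        rw [𝒢.s_inv, ← mp.comp x]; exact hm1
      have hX2 : 𝒢.s x = 𝒢.r (p₁ (𝒢.mul (𝒢.inv (p₂ x)) y hV1)) := by
        rw [mp.r_p₁, 𝒢.r_mul, 𝒢.r_inv, mp.s_p₂]
      rw [𝒢.IMP12_apply mp _ x y z hm1 hV1 hX2, 𝒢.IMP23_zero mp _ x y z hm2]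
      have hd : 𝒢.s (𝒢.inv (p₂ x)) = 𝒢.r (p₁ y) := by rw [mp.r_p₁]; exact hV1
      have hxy : 𝒢.s (p₁ x) = 𝒢.r (p₁ y) := by rw [mp.r_p₁]; exact hm1
      have hvv : 𝒢.s (p₂ (𝒢.mul (𝒢.inv (p₂ x)) (p₁ y) hd)) = 𝒢.r (p₂ y) := by
        rw [mp.s_p₂, 𝒢.s_mul]; exact mp.comp y
      have k3 := (𝒢.key mp x y hV1 hX2 hd hxy hvv).2.2.1
      refine 𝒢.IMP13_zero mp _ _ _ z fun hc => hm2 ?_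
      rw [k3, 𝒢.s_mul] at hc
      exact hc
  · -- `s (p₁ x) ≠ r y`
    rw [𝒢.IMP12_zero mp _ x y z hm1]
    by_cases hm2 : 𝒢.s (p₁ y) = 𝒢.r z
    · have hW1 : 𝒢.s (𝒢.inv (p₂ y)) = 𝒢.r z := by
        rw [𝒢.s_inv, ← mp.comp y]; exact hm2
      have hY2 : 𝒢.s y = 𝒢.r (p₁ (𝒢.mul (𝒢.inv (p₂ y)) z hW1)) := by
        rw [mp.r_p₁, 𝒢.r_mul, 𝒢.r_inv, mp.s_p₂]
      rw [𝒢.IMP23_apply mp _ x y z hm2 hW1 hY2]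
      exact (𝒢.IMP12_zero mp ξ x _ _ fun hc => hm1 (by rwa [𝒢.r_mul] at hc)).symm
    · rw [𝒢.IMP23_zero mp _ x y z hm2]

end

end Gpd
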